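/- Monotonicity: let α > 0 and suppose the achievement matrix x is obtained from y by a deprived increment among the poor, i.e. there is a single entry (i', j') with x_{i'j'} > y_{i'j'}, all other entries of x and y coincide, y_{i'j'} < z_{j'}, and person i' is poor in y (ρ_k(y_{i'}) = 1). Then FGT_α(x; z) < FGT_α(y; z). -/
import Mathlib


open Finset

/-- Deprivation gap `r_{ij}^α` for an achievement row `y` (convention `0 ^ (0:ℝ) = 1`). -/
noncomputable def gap {d : ℕ} (z y : Fin d → ℝ) (α : ℝ) (j : Fin d) : ℝ :=
  if y j ≤ z j then ((z j - y j) / z j) ^ α else 0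

/-- Network-adjusted deprivation `D_{ij}^α`. -/
noncomputable def Dnet {d : ℕ} (M : Fin d → Fin d → ℝ) (z y : Fin d → ℝ) (α : ℝ)
    (j : Fin d) : ℝ :=
  gap z y α j + (1 / ((d : ℝ) - 1)) * ∑ j' ∈ Finset.univ.erase j, M j j' * gap z y α j'

/-- Sum `Σ_j` of the `j`-th column of `M`. -/
noncomputable def colSum {d : ℕ} (M : Fin d → Fin d → ℝ) (j : Fin d) : ℝ := ∑ j', M j' j

/-- Weighted deprivation count `D_i = Σ_j w_j D_{ij}^0`. -/
noncomputable def Dcount {d : ℕ} (M : Fin d → Fin d → ℝ) (z w y : Fin d → ℝ) : ℝ :=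
  ∑ j, w j * Dnet M z y 0 j

/-- Dual-cutoff identification function `ρ_k`. -/
noncomputable def rho {d : ℕ} (M : Fin d → Fin d → ℝ) (z w : Fin d → ℝ) (k : ℝ)
    (y : Fin d → ℝ) : ℝ :=
  if k ≤ Dcount M z w y then 1 else 0

/-- Network-adjusted FGT measure with normalizing constant `dt`. -/
noncomputable def FGT {N d : ℕ} (M : Fin d → Fin d → ℝ) (z w : Fin d → ℝ) (k α dt : ℝ)
    (y : Fin N → Fin d → ℝ) : ℝ :=
  (1 / ((N : ℝ) * dt)) * ∑ i, ∑ j, w j * Dnet M z (y i) α j * rho M z w k (y i)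

lemma gap_nonneg' {d : ℕ} (z y : Fin d → ℝ) (α : ℝ) (j : Fin d) (hz : 0 < z j) :
    0 ≤ gap z y α j := by
  unfold gap
  split_ifs with h
  · exact Real.rpow_nonneg (div_nonneg (sub_nonneg.mpr h) hz.le) α
  · exact le_refl 0

lemma gap_pos' {d : ℕ} (z y : Fin d → ℝ) (α : ℝ) (j : Fin d) (hz : 0 < z j)
    (h : y j < z j) : 0 < gap z y α j := by
  unfold gap
  rw [if_pos h.le]
  exact Real.rpow_pos_of_pos (div_pos (sub_pos.mpr h) hz) α

lemma gap_lt' {d : ℕ} (z u v : Fin d → ℝ) (α : ℝ) (hα : 0 < α) (j : Fin d)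
    (hz : 0 < z j) (hdep : v j < z j) (hgt : v j < u j) :
    gap z u α j < gap z v α j := by
  unfold gap
  rw [if_pos hdep.le]
  split_ifs with h
  · apply Real.rpow_lt_rpow (div_nonneg (sub_nonneg.mpr h) hz.le) _ hα
    gcongr
  · exact Real.rpow_pos_of_pos (div_pos (sub_pos.mpr hdep) hz) α

/-- monotonicity — for `α > 0`, a deprived increment among the poor strictly
decreases FGT. -/
theorem FGT_monotonicity
    (d : ℕ) (hd : 2 ≤ d) (z : Fin d → ℝ) (hz : ∀ j, 0 < z j)
    (M : Fin d → Fin d → ℝ) (hM0 : ∀ j j', 0 ≤ M j j') (hM1 : ∀ j j', M j j' ≤ 1)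
    (hMdiag : ∀ j, M j j = 1)
    (w : Fin d → ℝ) (hw : ∀ j, 0 < w j) (hwsum : (∑ j, w j) = (d : ℝ))
    (dt : ℝ) (hdt : dt = (d : ℝ) + ((∑ j, w j * colSum M j) - (d : ℝ)) / ((d : ℝ) - 1))
    (k : ℝ) (hk0 : 0 < k) (hk1 : k ≤ dt) (α : ℝ) (hα : 0 < α)
    (N : ℕ) (hN : 1 ≤ N)
    (x y : Fin N → Fin d → ℝ) (hx : ∀ i j, 0 ≤ x i j) (hy : ∀ i j, 0 ≤ y i j)
    (i' : Fin N) (j' : Fin d) (hgt : y i' j' < x i' j') (hdep : y i' j' < z j')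
    (hother : ∀ i j, ¬(i = i' ∧ j = j') → x i j = y i j)
    (hpoor : rho M z w k (y i') = 1) :
    FGT M z w k α dt x < FGT M z w k α dt y := by
  have hdR : (2:ℝ) ≤ (d:ℝ) := by exact_mod_cast hd
  have hd1 : (0:ℝ) ≤ 1 / ((d:ℝ) - 1) := by
    have h : (0:ℝ) < (d:ℝ) - 1 := by linarith
    positivity
  have hrow : ∀ i, i ≠ i' → x i = y i := fun i hi =>
    funext fun j => hother i j (fun h => hi h.1)
  have hueq : ∀ j, j ≠ j' → x i' j = y i' j := fun j hj =>
    hother i' j (fun h => hj h.2)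
  have hgapeq : ∀ j, j ≠ j' → gap z (x i') α j = gap z (y i') α j := by
    intro j hj; unfold gap; rw [hueq j hj]
  have hgaplt : gap z (x i') α j' < gap z (y i') α j' :=
    gap_lt' z (x i') (y i') α hα j' (hz j') hdep hgt
  have hgaple : ∀ j, gap z (x i') α j ≤ gap z (y i') α j := by
    intro j
    by_cases hj : j = j'
    · subst hj; exact hgaplt.le
    · exact (hgapeq j hj).le
  -- Dnet comparisons
  have hDle : ∀ j, Dnet M z (x i') α j ≤ Dnet M z (y i') α j := by
    intro j
    unfold Dnet
    refine add_le_add (hgaple j) (mul_le_mul_of_nonneg_left ?_ hd1)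
    exact Finset.sum_le_sum fun j'' _ =>
      mul_le_mul_of_nonneg_left (hgaple j'') (hM0 j j'')
  have hDlt : Dnet M z (x i') α j' < Dnet M z (y i') α j' := by
    unfold Dnet
    refine add_lt_add_of_lt_of_le hgaplt (le_of_eq ?_)
    refine congrArg _ (Finset.sum_congr rfl fun j'' hj'' => ?_)
    rw [hgapeq j'' (Finset.ne_of_mem_erase hj'')]
  have hDnn : ∀ (u : Fin N → Fin d → ℝ) (i : Fin N) (j : Fin d),
      0 ≤ Dnet M z (u i) α j := by
    intro u i j
    unfold Dnet
    refine add_nonneg (gap_nonneg' z (u i) α j (hz j)) (mul_nonneg hd1 ?_)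
    exact Finset.sum_nonneg fun j'' _ =>
      mul_nonneg (hM0 j j'') (gap_nonneg' z (u i) α j'' (hz j''))
  have hSlt : ∑ j, w j * Dnet M z (x i') α j < ∑ j, w j * Dnet M z (y i') α j := by
    refine Finset.sum_lt_sum (fun j _ => mul_le_mul_of_nonneg_left (hDle j) (hw j).le)
      ⟨j', Finset.mem_univ j', ?_⟩
    exact mul_lt_mul_of_pos_left hDlt (hw j')
  have hSvpos : 0 < ∑ j, w j * Dnet M z (y i') α j := by
    refine Finset.sum_pos' (fun j _ => mul_nonneg (hw j).le (hDnn y i' j))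
      ⟨j', Finset.mem_univ j', ?_⟩
    refine mul_pos (hw j') ?_
    calc (0:ℝ) < gap z (y i') α j' := gap_pos' z (y i') α j' (hz j') hdep
    _ ≤ Dnet M z (y i') α j' := by
        unfold Dnet
        refine le_add_of_nonneg_right (mul_nonneg hd1 ?_)
        exact Finset.sum_nonneg fun j'' _ =>
          mul_nonneg (hM0 j' j'') (gap_nonneg' z (y i') α j'' (hz j''))
  -- compare inner sums for each i
  have hterm : ∀ i, (∑ j, w j * Dnet M z (x i) α j * rho M z w k (x i)) ≤
      ∑ j, w j * Dnet M z (y i) α j * rho M z w k (y i) := by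
    intro i
    by_cases hi : i = i'
    · subst hi
      rw [hpoor]
      simp only [mul_one]
      have hr : rho M z w k (x i) = 0 ∨ rho M z w k (x i) = 1 := by
        unfold rho; split_ifs <;> simp
      rcases hr with hr | hr
      · rw [hr]
        simp only [mul_zero]
        rw [Finset.sum_const_zero]
        exact hSvpos.le
      · rw [hr]; simp only [mul_one]; exact hSlt.le
    · rw [hrow i hi]
  have htermlt : (∑ j, w j * Dnet M z (x i') α j * rho M z w k (x i')) <
      ∑ j, w j * Dnet M z (y i') α j * rho M z w k (y i') := by
    rw [hpoor]
    simp only [mul_one]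
    have hr : rho M z w k (x i') = 0 ∨ rho M z w k (x i') = 1 := by
      unfold rho; split_ifs <;> simp
    rcases hr with hr | hr
    · rw [hr]
      simp only [mul_zero, Finset.sum_const_zero]
      exact hSvpos
    · rw [hr]; simp only [mul_one]; exact hSlt
  have hsumlt : (∑ i, ∑ j, w j * Dnet M z (x i) α j * rho M z w k (x i)) <
      ∑ i, ∑ j, w j * Dnet M z (y i) α j * rho M z w k (y i) :=
    Finset.sum_lt_sum (fun i _ => hterm i) ⟨i', Finset.mem_univ i', htermlt⟩
  have hcpos : 0 < 1 / ((N:ℝ) * dt) := by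
    have hNpos : (0:ℝ) < N := by exact_mod_cast Nat.lt_of_lt_of_le Nat.zero_lt_one hN
    have hdtpos : 0 < dt := lt_of_lt_of_le hk0 hk1
    positivity
  unfold FGT
  exact mul_lt_mul_of_pos_left hsumlt hcpos
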